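/- If C is a cycle in a finite graph G that is not geodesic, then C can be written as the symmetric difference of two cycles each strictly shorter than C. -/

import Mathlib

open SimpleGraph

section Helpers


variable {V : Type*} [DecidableEq V] {G : SimpleGraph V}

theorem takeUntil_start {u v : V} (p : G.Walk u v) (h : u ∈ p.support) :
    p.takeUntil u h = Walk.nil := by
  cases p with
  | nil => rfl
  | cons r p => simp [Walk.takeUntil]

theorem takeUntil_append_left {u v x w : V} (p : G.Walk u v) (q : G.Walk v x)
    (hw : w ∈ p.support) (h : w ∈ (p.append q).support) :
    (p.append q).takeUntil w h = p.takeUntil w hw := by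
  induction p with
  | nil =>
    simp only [Walk.mem_support_nil_iff] at hw
    subst hw
    simp [takeUntil_start]
  | @cons s a b r p ih =>
    by_cases hx : s = w
    · subst hx
      simp [Walk.takeUntil]
    · have hw' : w ∈ p.support := by
        rw [Walk.support_cons] at hw
        rcases List.mem_cons.mp hw with rfl | hw'
        · exact absurd rfl hx
        · exact hw'
      simp only [Walk.cons_append, Walk.takeUntil, dif_neg hx]
      exact congrArg _ (ih q hw' _)

theorem takeUntil_append_right {u v x w : V} (p : G.Walk u v) (q : G.Walk v x)
    (hw : w ∉ p.support) (hq : w ∈ q.support) (h : w ∈ (p.append q).support) :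
    (p.append q).takeUntil w h = p.append (q.takeUntil w hq) := by
  induction p with
  | nil => rfl
  | @cons s a b r p ih =>
    have hx : s ≠ w := fun hs => hw (hs ▸ Walk.start_mem_support _)
    have hw' : w ∉ p.support := fun hs => hw (by rw [Walk.support_cons]; exact List.mem_cons_of_mem _ hs)
    simp only [Walk.cons_append, Walk.takeUntil, dif_neg hx]
    exact congrArg _ (ih q hw' hq _)

theorem dropUntil_append_left {u v x w : V} (p : G.Walk u v) (q : G.Walk v x)
    (hw : w ∈ p.support) (h : w ∈ (p.append q).support) :
    (p.append q).dropUntil w h = (p.dropUntil w hw).append q := by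
  induction p with
  | nil =>
    simp only [Walk.mem_support_nil_iff] at hw
    subst hw
    cases q with
    | nil => rfl
    | cons r q => simp [Walk.dropUntil]
  | @cons s a b r p ih =>
    by_cases hx : s = w
    · subst hx
      simp [Walk.dropUntil]
    · have hw' : w ∈ p.support := by
        rw [Walk.support_cons] at hw
        rcases List.mem_cons.mp hw with rfl | hw'
        · exact absurd rfl hx
        · exact hw'
      simp only [Walk.cons_append, Walk.dropUntil, dif_neg hx]
      exact ih q hw' _

theorem dropUntil_append_right {u v x w : V} (p : G.Walk u v) (q : G.Walk v x)
    (hw : w ∉ p.support) (hq : w ∈ q.support) (h : w ∈ (p.append q).support) :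
    (p.append q).dropUntil w h = q.dropUntil w hq := by
  induction p with
  | nil => rfl
  | @cons s a b r p ih =>
    have hx : s ≠ w := fun hs => hw (hs ▸ Walk.start_mem_support _)
    have hw' : w ∉ p.support := fun hs => hw (by rw [Walk.support_cons]; exact List.mem_cons_of_mem _ hs)
    simp only [Walk.cons_append, Walk.dropUntil, dif_neg hx]
    exact ih q hw' hq _

theorem loop_path_nil {w : V} (q : G.Walk w w) (hq : q.IsPath) : q = Walk.nil := by
  cases q with
  | nil => rfl
  | cons r q =>
    exfalso
    have hnd := (Walk.isPath_def _).mp hq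
    rw [Walk.support_cons] at hnd
    exact (List.nodup_cons.mp hnd).1 q.end_mem_support

theorem takeUntil_end {u w : V} (p : G.Walk u w) (hp : p.IsPath) (h : w ∈ p.support) :
    p.takeUntil w h = p := by
  have hspec := p.take_spec h
  have hnil : p.dropUntil w h = Walk.nil := loop_path_nil _ (hp.dropUntil h)
  rw [hnil, Walk.append_nil] at hspec
  exact hspec

theorem length_take_add_drop {u v w : V} (p : G.Walk v w) (h : u ∈ p.support) :
    (p.takeUntil u h).length + (p.dropUntil u h).length = p.length := by
  rw [← Walk.length_append, p.take_spec h]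

theorem cycle_tail_eq {u w : V} (d : G.Walk u u) (hw : w ∈ d.support) :
    d.support.tail = (d.takeUntil w hw).support.tail ++ (d.dropUntil w hw).support.tail := by
  conv_lhs => rw [← d.take_spec hw]
  exact Walk.tail_support_append _ _

theorem end_mem_tail {u w : V} (p : G.Walk u w) (hne : w ≠ u) : w ∈ p.support.tail := by
  have h := p.end_mem_support
  rw [p.support_eq_cons] at h
  rcases List.mem_cons.mp h with h | h
  · exact absurd h hne
  · exact h

theorem cycle_takeUntil_isPath {u w : V} {d : G.Walk u u} (hd : d.IsCycle)
    (hw : w ∈ d.support) (hne : w ≠ u) : (d.takeUntil w hw).IsPath := by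
  have hnd := hd.support_nodup
  rw [cycle_tail_eq d hw] at hnd
  obtain ⟨h1, h2, hdisj⟩ := List.nodup_append'.mp hnd
  rw [Walk.isPath_def, (d.takeUntil w hw).support_eq_cons]
  refine List.nodup_cons.mpr ⟨fun hu => ?_, h1⟩
  exact hdisj hu (end_mem_tail (d.dropUntil w hw) (Ne.symm hne))

theorem cycle_dropUntil_isPath {u w : V} {d : G.Walk u u} (hd : d.IsCycle)
    (hw : w ∈ d.support) (hne : w ≠ u) : (d.dropUntil w hw).IsPath := by
  have hnd := hd.support_nodup
  rw [cycle_tail_eq d hw] at hnd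
  obtain ⟨h1, h2, hdisj⟩ := List.nodup_append'.mp hnd
  rw [Walk.isPath_def, (d.dropUntil w hw).support_eq_cons]
  refine List.nodup_cons.mpr ⟨fun hwmem => ?_, h2⟩
  exact hdisj (end_mem_tail (d.takeUntil w hw) hne) hwmem

theorem path_edge_ends_not_mem {u w : V} (p : G.Walk u w) (hp : p.IsPath)
    (hlen : 2 ≤ p.length) : s(u, w) ∉ p.edges := by
  cases p with
  | nil => simp
  | cons r p =>
    rename_i y
    intro hmem
    rw [Walk.edges_cons] at hmem
    rcases List.mem_cons.mp hmem with h | h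
    · have hyw : y = w := by
        have := Sym2.eq_iff.mp h
        rcases this with ⟨-, h⟩ | ⟨h1, -⟩
        · exact h.symm
        · exact absurd h1 (G.ne_of_adj r)
      subst hyw
      have : p = Walk.nil := loop_path_nil p hp.of_cons
      rw [this] at hlen
      simp at hlen
    · have : u ∈ p.support := Walk.fst_mem_support_of_mem_edges p h
      rw [Walk.isPath_def, Walk.support_cons] at hp
      exact (List.nodup_cons.mp hp).1 this

theorem takeUntil_congr {u v w : V} {p p' : G.Walk u v} (h : p = p') (hw : w ∈ p.support)
    (hw' : w ∈ p'.support) : p.takeUntil w hw = p'.takeUntil w hw' := by subst h; rfl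

theorem dropUntil_congr {u v w : V} {p p' : G.Walk u v} (h : p = p') (hw : w ∈ p.support)
    (hw' : w ∈ p'.support) : p.dropUntil w hw = p'.dropUntil w hw' := by subst h; rfl

theorem tail_take_drop {u v w : V} (p : G.Walk v w) (h : u ∈ p.support) :
    p.support.tail = (p.takeUntil u h).support.tail ++ (p.dropUntil u h).support.tail := by
  conv_lhs => rw [← p.take_spec h]
  exact Walk.tail_support_append _ _

theorem mem_support_rotate {u z x : V} (d : G.Walk u u) (hz : z ∈ d.support)
    (hx : x ∈ d.support) : x ∈ (d.rotate z hz).support := by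
  rw [Walk.rotate, Walk.mem_support_append_iff]
  conv at hx => rw [← d.take_spec hz]
  rw [Walk.mem_support_append_iff] at hx
  exact hx.symm

theorem length_rotate {u z : V} (d : G.Walk u u) (hz : z ∈ d.support) :
    (d.rotate z hz).length = d.length := by
  rw [Walk.rotate, Walk.length_append, Nat.add_comm, length_take_add_drop]

theorem mem_of_mem_tail {u v x : V} {p : G.Walk u v} (h : x ∈ p.support.tail) :
    x ∈ p.support := by
  rw [p.support_eq_cons]
  exact List.mem_cons_of_mem _ h

end Helpers


/-- A cycle is geodesic if for any two of its vertices, the shorter of the two arcs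
of the cycle between them realizes the graph distance. -/
def SimpleGraph.IsGeodesicCycle {V : Type*} [DecidableEq V] (G : SimpleGraph V) {x : V}
    (c : G.Walk x x) : Prop :=
  c.IsCycle ∧ ∀ (u : V) (hu : u ∈ c.support) (w : V) (hw : w ∈ (c.rotate u hu).support),
    min ((c.rotate u hu).takeUntil w hw).length
        (c.length - ((c.rotate u hu).takeUntil w hw).length) = G.dist u w

set_option maxHeartbeats 2000000 in
theorem stmt11 {V : Type*} [Fintype V] [DecidableEq V] (G : SimpleGraph V)
    [DecidableRel G.Adj] {x : V} (c : G.Walk x x) (hc : c.IsCycle)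
    (hng : ¬ G.IsGeodesicCycle c) :
    ∃ (v₁ v₂ : V) (c₁ : G.Walk v₁ v₁) (c₂ : G.Walk v₂ v₂),
      c₁.IsCycle ∧ c₂.IsCycle ∧ c₁.length < c.length ∧ c₂.length < c.length ∧
      c.edges.toFinset = symmDiff c₁.edges.toFinset c₂.edges.toFinset := by
  classical
  have hB : ¬ ∀ (u : V) (hu : u ∈ c.support) (w : V) (hw : w ∈ (c.rotate u hu).support),
      min ((c.rotate u hu).takeUntil w hw).length
        (c.length - ((c.rotate u hu).takeUntil w hw).length) = G.dist u w :=
    fun h => hng ⟨hc, h⟩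
  push_neg at hB
  obtain ⟨u0, hu0, w0, hw0, hne0⟩ := hB
  -- the minimization predicate
  set P : ℕ → Prop := fun n => ∃ (u : V) (d : G.Walk u u), d.IsCycle ∧ d.length = c.length ∧
      d.edges.toFinset = c.edges.toFinset ∧ ∃ (w : V) (hw : w ∈ d.support),
      G.dist u w < min (d.takeUntil w hw).length (d.length - (d.takeUntil w hw).length) ∧
      G.dist u w = n with hP
  have hP0 : P (G.dist u0 w0) := by
    refine ⟨u0, c.rotate u0 hu0, hc.rotate hu0, length_rotate c hu0, 
      List.toFinset_eq_of_perm _ _ (c.rotate_edges u0 hu0).perm, w0, hw0, ?_, rfl⟩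
    have h1 : G.dist u0 w0 ≤ ((c.rotate u0 hu0).takeUntil w0 hw0).length :=
      SimpleGraph.dist_le _
    have h2 : G.dist u0 w0 ≤ ((c.rotate u0 hu0).dropUntil w0 hw0).length := by
      rw [SimpleGraph.dist_comm]
      exact SimpleGraph.dist_le _
    have h3 := length_take_add_drop (c.rotate u0 hu0) hw0
    rw [length_rotate c hu0] at h3 ⊢
    omega
  have hex : ∃ n, P n := ⟨_, hP0⟩
  obtain ⟨u, d, hdcyc, hdlen, hdedg, w, hw, hviol, hdist⟩ := Nat.find_spec hex
  have hmin : ∀ m, m < Nat.find hex → ¬ P m := fun m hm => Nat.find_min hex hm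
  set A := d.takeUntil w hw with hA
  set B := d.dropUntil w hw with hB'
  have hab : A.length + B.length = d.length := length_take_add_drop d hw
  have huw : u ≠ w := by
    rintro rfl
    have h0 : A.length = 0 := by simp [hA, takeUntil_start]
    have h1 : G.dist u u = 0 := SimpleGraph.dist_self
    omega
  have hwu : w ≠ u := Ne.symm huw
  have hApath : A.IsPath := cycle_takeUntil_isPath hdcyc hw hwu
  have hBpath : B.IsPath := cycle_dropUntil_isPath hdcyc hw hwu
  -- a shortest path
  obtain ⟨p, hppath, hplen⟩ := SimpleGraph.Reachable.exists_path_of_dist ⟨A⟩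
  have hp1 : 1 ≤ p.length := by
    rcases Nat.eq_zero_or_pos p.length with h | h
    · exact absurd (Walk.eq_of_length_eq_zero h) huw
    · exact h
  have hpa : p.length < A.length ∧ p.length < B.length := by
    rw [hplen]; constructor <;> omega
  have hnd0 := hdcyc.support_nodup
  have hnd0' : (A.support.tail ++ B.support.tail).Nodup := by
    rw [← cycle_tail_eq d hw]; exact hnd0
  have hwBtail : w ∉ B.support.tail :=
    fun hmem => (List.nodup_append'.mp hnd0').2.2 (end_mem_tail A hwu) hmem
  have hclaim : ∀ z, z ∈ p.support → z ∈ d.support → z = u ∨ z = w := by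
    intro z hzp hzd
    by_contra hcon
    push_neg at hcon
    obtain ⟨hzu, hzw⟩ := hcon
    have hl := length_take_add_drop p hzp
    set l1 := (p.takeUntil z hzp).length with hl1def
    set l2 := (p.dropUntil z hzp).length with hl2def
    have hl1 : 1 ≤ l1 := by
      rcases Nat.eq_zero_or_pos l1 with h | h
      · exact absurd (Walk.eq_of_length_eq_zero h).symm hzu
      · exact h
    have hl2 : 1 ≤ l2 := by
      rcases Nat.eq_zero_or_pos l2 with h | h
      · exact absurd (Walk.eq_of_length_eq_zero h) hzw
      · exact h
    have hd1 : G.dist u z ≤ l1 := SimpleGraph.dist_le _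
    have hd2 : G.dist z w ≤ l2 := SimpleGraph.dist_le _
    have hplen' : l1 + l2 = G.dist u w := by rw [← hplen]; exact hl
    have hnv1 : min (d.takeUntil z hzd).length (d.length - (d.takeUntil z hzd).length)
        ≤ G.dist u z := by
      by_contra hlt
      push_neg at hlt
      exact hmin _ (by omega) ⟨u, d, hdcyc, hdlen, hdedg, z, hzd, hlt, rfl⟩
    have hwrot : w ∈ (d.rotate z hzd).support := mem_support_rotate d hzd hw
    have hnv2 : min ((d.rotate z hzd).takeUntil w hwrot).length
        (d.length - ((d.rotate z hzd).takeUntil w hwrot).length) ≤ G.dist z w := by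
      by_contra hlt
      push_neg at hlt
      refine hmin _ (by omega) ⟨z, d.rotate z hzd, hdcyc.rotate hzd,
        by rw [length_rotate]; exact hdlen,
        by rw [List.toFinset_eq_of_perm _ _ (d.rotate_edges z hzd).perm]; exact hdedg,
        w, hwrot, ?_, rfl⟩
      rw [length_rotate]
      exact hlt
    by_cases hzA : z ∈ A.support
    · have hzAB : z ∈ (A.append B).support := (Walk.mem_support_append_iff _ _).mpr (Or.inl hzA)
      have e1 : d.takeUntil z hzd = A.takeUntil z hzA :=
        (takeUntil_congr (d.take_spec hw).symm hzd hzAB).trans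
          (takeUntil_append_left A B hzA hzAB)
      have e2 : d.dropUntil z hzd = (A.dropUntil z hzA).append B :=
        (dropUntil_congr (d.take_spec hw).symm hzd hzAB).trans
          (dropUntil_append_left A B hzA hzAB)
      set A1 := A.takeUntil z hzA with hA1def
      set A2 := A.dropUntil z hzA with hA2def
      have hiA : A1.length + A2.length = A.length := length_take_add_drop A hzA
      have hA2path : A2.IsPath := hApath.dropUntil hzA
      have hA2end : w ∈ A2.support := A2.end_mem_support
      have e3 : d.rotate z hzd = (A2.append B).append A1 := by
        rw [Walk.rotate, e1, e2]
      have hwAB : w ∈ (A2.append B).support :=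
        (Walk.mem_support_append_iff _ _).mpr (Or.inl hA2end)
      have hwAB1 : w ∈ ((A2.append B).append A1).support :=
        (Walk.mem_support_append_iff _ _).mpr (Or.inl hwAB)
      have e4 : (d.rotate z hzd).takeUntil w hwrot = A2 := by
        rw [takeUntil_congr e3 hwrot hwAB1,
          takeUntil_append_left _ A1 hwAB hwAB1,
          takeUntil_append_left A2 B hA2end hwAB,
          takeUntil_end A2 hA2path]
      have hi1 : 1 ≤ A1.length := by
        rcases Nat.eq_zero_or_pos A1.length with h | h
        · exact absurd (Walk.eq_of_length_eq_zero h).symm hzu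
        · exact h
      have hi2 : 1 ≤ A2.length := by
        rcases Nat.eq_zero_or_pos A2.length with h | h
        · exact absurd (Walk.eq_of_length_eq_zero h) hzw
        · exact h
      rw [e1] at hnv1
      rw [e4] at hnv2
      omega
    · have hzd' : z ∈ (A.append B).support := by rw [d.take_spec hw]; exact hzd
      have hzB : z ∈ B.support := by
        rcases (Walk.mem_support_append_iff _ _).mp hzd' with h | h
        · exact absurd h hzA
        · exact h
      have e1 : d.takeUntil z hzd = A.append (B.takeUntil z hzB) :=
        (takeUntil_congr (d.take_spec hw).symm hzd hzd').trans
          (takeUntil_append_right A B hzA hzB hzd')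
      have e2 : d.dropUntil z hzd = B.dropUntil z hzB :=
        (dropUntil_congr (d.take_spec hw).symm hzd hzd').trans
          (dropUntil_append_right A B hzA hzB hzd')
      set B1 := B.takeUntil z hzB with hB1def
      set B2 := B.dropUntil z hzB with hB2def
      have hkB : B1.length + B2.length = B.length := length_take_add_drop B hzB
      have hk1 : 1 ≤ B1.length := by
        rcases Nat.eq_zero_or_pos B1.length with h | h
        · exact absurd (Walk.eq_of_length_eq_zero h) (fun h' => hzw h'.symm)
        · exact h
      have hk2 : 1 ≤ B2.length := by
        rcases Nat.eq_zero_or_pos B2.length with h | h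
        · exact absurd (Walk.eq_of_length_eq_zero h) hzu
        · exact h
      have hwB2 : w ∉ B2.support := by
        intro hmem
        rw [B2.support_eq_cons] at hmem
        rcases List.mem_cons.mp hmem with h | h
        · exact hzw h.symm
        · apply hwBtail
          rw [tail_take_drop B hzB]
          exact List.mem_append_right _ h
      have e3 : d.rotate z hzd = B2.append (A.append B1) := by rw [Walk.rotate, e1, e2]
      have hwAB1 : w ∈ (A.append B1).support :=
        (Walk.mem_support_append_iff _ _).mpr (Or.inl A.end_mem_support)
      have hwrot' : w ∈ (B2.append (A.append B1)).support :=
        (Walk.mem_support_append_iff _ _).mpr (Or.inr hwAB1)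
      have e4 : (d.rotate z hzd).takeUntil w hwrot = B2.append A := by
        rw [takeUntil_congr e3 hwrot hwrot',
          takeUntil_append_right B2 _ hwB2 hwAB1 hwrot',
          takeUntil_append_left A B1 A.end_mem_support hwAB1,
          takeUntil_end A hApath]
      have hlen4 : ((d.rotate z hzd).takeUntil w hwrot).length = B2.length + A.length := by
        rw [e4, Walk.length_append]
      rw [e1, Walk.length_append] at hnv1
      rw [hlen4] at hnv2
      omega
  have hab2 : 2 ≤ A.length ∧ 2 ≤ B.length := by omega
  have hPd : ∀ e, e ∈ p.edges → e ∈ d.edges → e = s(u, w) := by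
    intro e
    refine Sym2.ind (fun x y hep hed => ?_) e
    have hx1 : x ∈ p.support := p.fst_mem_support_of_mem_edges hep
    have hy1 : y ∈ p.support := p.snd_mem_support_of_mem_edges hep
    have hx2 : x ∈ d.support := d.fst_mem_support_of_mem_edges hed
    have hy2 : y ∈ d.support := d.snd_mem_support_of_mem_edges hed
    have hxy : x ≠ y := G.ne_of_adj (p.adj_of_mem_edges hep)
    rcases hclaim x hx1 hx2 with rfl | rfl <;> rcases hclaim y hy1 hy2 with rfl | rfl
    · exact absurd rfl hxy
    · rfl
    · exact Sym2.eq_swap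
    · exact absurd rfl hxy
  have hPA : ∀ e, e ∈ p.edges → e ∈ A.edges → False := by
    intro e hep heA
    have he := hPd e hep (Walk.edges_takeUntil_subset d hw heA)
    rw [he] at heA
    exact path_edge_ends_not_mem A hApath (by omega) heA
  have hPB : ∀ e, e ∈ p.edges → e ∈ B.edges → False := by
    intro e hep heB
    have he := hPd e hep (Walk.edges_dropUntil_subset d hw heB)
    rw [he, Sym2.eq_swap] at heB
    exact path_edge_ends_not_mem B hBpath (by omega) heB
  have hdeq : d.edges = A.edges ++ B.edges := by
    conv_lhs => rw [← d.take_spec hw]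
    exact Walk.edges_append _ _
  have hABnd : (A.edges ++ B.edges).Nodup := by
    rw [← hdeq]
    exact hdcyc.isCircuit.isTrail.edges_nodup
  have hAB : ∀ e, e ∈ A.edges → e ∈ B.edges → False :=
    fun e h1 h2 => (List.nodup_append'.mp hABnd).2.2 h1 h2
  -- first cycle
  have hc1 : (A.append p.reverse).IsCycle := by
    rw [Walk.isCycle_def]
    refine ⟨?_, ?_, ?_⟩
    · rw [Walk.isTrail_def, Walk.edges_append]
      refine List.nodup_append'.mpr ⟨hApath.isTrail.edges_nodup, ?_, ?_⟩
      · rw [Walk.edges_reverse]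
        exact List.nodup_reverse.mpr hppath.isTrail.edges_nodup
      · intro e heA herev
        rw [Walk.edges_reverse, List.mem_reverse] at herev
        exact hPA e herev heA
    · intro hnil
      have hlen : (A.append p.reverse).length = A.length + p.length := by
        rw [Walk.length_append, Walk.length_reverse]
      rw [hnil] at hlen
      simp only [Walk.length_nil] at hlen
      omega
    · rw [Walk.tail_support_append]
      refine List.nodup_append'.mpr ⟨hApath.support_nodup.tail, 
        hppath.reverse.support_nodup.tail, ?_⟩
      intro v hvA hvp
      have hv1 : v ∈ A.support := mem_of_mem_tail hvA
      have hvu : v ≠ u := by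
        have hnA := hApath.support_nodup
        rw [A.support_eq_cons] at hnA
        exact fun h => (List.nodup_cons.mp hnA).1 (h ▸ hvA)
      have hv2 : v ∈ p.support := by
        have hm := mem_of_mem_tail hvp
        rw [Walk.support_reverse, List.mem_reverse] at hm
        exact hm
      have hvw : v ≠ w := by
        have hnp := hppath.reverse.support_nodup
        rw [(p.reverse).support_eq_cons] at hnp
        exact fun h => (List.nodup_cons.mp hnp).1 (h ▸ hvp)
      rcases hclaim v hv2 ((Walk.support_takeUntil_subset d hw) hv1) with rfl | rfl
      · exact hvu rfl
      · exact hvw rfl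
  -- second cycle
  have hc2 : (p.append B).IsCycle := by
    rw [Walk.isCycle_def]
    refine ⟨?_, ?_, ?_⟩
    · rw [Walk.isTrail_def, Walk.edges_append]
      refine List.nodup_append'.mpr ⟨hppath.isTrail.edges_nodup, 
        hBpath.isTrail.edges_nodup, ?_⟩
      intro e hep heB
      exact hPB e hep heB
    · intro hnil
      have hlen : (p.append B).length = p.length + B.length := Walk.length_append _ _
      rw [hnil] at hlen
      simp only [Walk.length_nil] at hlen
      omega
    · rw [Walk.tail_support_append]
      refine List.nodup_append'.mpr ⟨hppath.support_nodup.tail, 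
        hBpath.support_nodup.tail, ?_⟩
      intro v hvp hvB
      have hv2 : v ∈ p.support := mem_of_mem_tail hvp
      have hvu : v ≠ u := by
        have hnp := hppath.support_nodup
        rw [p.support_eq_cons] at hnp
        exact fun h => (List.nodup_cons.mp hnp).1 (h ▸ hvp)
      have hv1 : v ∈ B.support := mem_of_mem_tail hvB
      have hvw : v ≠ w := fun h => hwBtail (h ▸ hvB)
      rcases hclaim v hv2 ((Walk.support_dropUntil_subset d hw) hv1) with rfl | rfl
      · exact hvu rfl
      · exact hvw rfl
  have hlen1 : (A.append p.reverse).length < c.length := by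
    rw [Walk.length_append, Walk.length_reverse]
    omega
  have hlen2 : (p.append B).length < c.length := by
    rw [Walk.length_append]
    omega
  refine ⟨u, u, A.append p.reverse, p.append B, hc1, hc2, hlen1, hlen2, ?_⟩
  have hce : c.edges.toFinset = A.edges.toFinset ∪ B.edges.toFinset := by
    rw [← hdedg, hdeq, List.toFinset_append]
  rw [hce, Walk.edges_append, Walk.edges_append, List.toFinset_append, List.toFinset_append,
    Walk.edges_reverse, List.toFinset_reverse]
  ext e
  simp only [Finset.mem_union, Finset.mem_symmDiff, List.mem_toFinset]
  have h1 := hPA e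
  have h2 := hPB e
  have h3 := hAB e
  tauto
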